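/- Uniform Nash–Williams theorem: Let B be a front on ℕ. There is a Borel map S : 2^B × [ℕ]^ω → [ℕ]^ω such that for every F ⊆ B and every infinite x ⊆ ℕ, S(F,x) is an infinite subset of x which is homogeneous for F, i.e. either every finite subset of S(F,x) belonging to B belongs to F, or no finite subset of S(F,x) belongs to F. -/

import Mathlib

open Set

/-- The Cantor space `2^ℕ`: subsets of `ℕ` identified with their characteristic functions. -/
abbrev Cantor : Type := ℕ → Bool

/-- The subset of `ℕ` coded by a point of Cantor space. -/
def toSet (x : Cantor) : Set ℕ := {n | x n = true}

/-- `s ⊑ z` : the finite set `s` is an initial segment of `z ⊆ ℕ`,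
i.e. `s = z ∩ {0,1,…,n}` for some `n`. -/
def InitSeg (s : Finset ℕ) (z : Set ℕ) : Prop := ∃ n : ℕ, (s : Set ℕ) = z ∩ Set.Iic n

/-- `s ⊑ t` for finite sets `s, t`. -/
def InitSegF (s t : Finset ℕ) : Prop := ∃ n : ℕ, s = t ∩ Finset.Iic n

/-- `B` is a front on the set `x ⊆ ℕ`: all members of `B` are subsets of `x`, any two
members of `B` are `⊑`-incomparable, and every infinite subset of `x` has an initial
segment in `B`. -/
def IsFrontOn (B : Set (Finset ℕ)) (x : Set ℕ) : Prop :=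
  (∀ s ∈ B, (s : Set ℕ) ⊆ x) ∧
  (∀ s ∈ B, ∀ t ∈ B, InitSegF s t → s = t) ∧
  (∀ y : Set ℕ, y ⊆ x → y.Infinite → ∃ s ∈ B, InitSeg s y)

/-- `y` is `F`-homogeneous: either every infinite subset of `y` has an initial segment
in `F`, or no finite subset of `y` belongs to `F`. -/
def Homog (F : Set (Finset ℕ)) (y : Set ℕ) : Prop :=
  (∀ z : Set ℕ, z ⊆ y → z.Infinite → ∃ s ∈ F, InitSeg s z) ∨
  (∀ s : Finset ℕ, (s : Set ℕ) ⊆ y → s ∉ F)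

/-- `I` is an ideal on `ℕ`: a family of subsets of `ℕ` closed under taking subsets
and under finite unions. -/
def IsIdeal (I : Set Cantor) : Prop :=
  (∀ x ∈ I, ∀ y : Cantor, toSet y ⊆ toSet x → y ∈ I) ∧
  (∀ x ∈ I, ∀ y ∈ I, (fun n => x n || y n) ∈ I)

/-- `I` is an `Fσ` subset of the Cantor space. -/
def IsFsigma (I : Set Cantor) : Prop :=
  ∃ C : ℕ → Set Cantor, (∀ n, IsClosed (C n)) ∧ I = ⋃ n, C n

/-- A family `C` is tall if every infinite subset of `ℕ` contains an infinite member of `C`. -/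
def Tall (C : Set Cantor) : Prop :=
  ∀ x : Cantor, (toSet x).Infinite → ∃ y ∈ C, (toSet y).Infinite ∧ toSet y ⊆ toSet x

/-- `S` is a Borel selector for the family `C`. -/
def IsSelector (C : Set Cantor) (S : Cantor → Cantor) : Prop :=
  Measurable S ∧ ∀ x : Cantor,
    toSet (S x) ⊆ toSet x ∧ ((toSet x).Infinite → (toSet (S x)).Infinite) ∧ S x ∈ C

/-- A Borel ideal `I` is uniformly selective. -/
def UnifSelective (I : Set Cantor) : Prop :=
  ∃ F : (ℕ → Cantor) → Cantor, Measurable F ∧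
    ∀ xs : ℕ → Cantor, (∀ n, xs n ∉ I) → (∀ n, toSet (xs (n + 1)) ⊆ toSet (xs n)) →
      F xs ∉ I ∧ ∀ n ∈ toSet (F xs), toSet (F xs) \ Set.Iic n ⊆ toSet (xs n)

/-- A Borel ideal `I` is uniformly `p⁺`. -/
def UnifPplus (I : Set Cantor) : Prop :=
  ∃ G : (ℕ → Cantor) → Cantor, Measurable G ∧
    ∀ xs : ℕ → Cantor, (∀ n, xs n ∉ I) → (∀ n, toSet (xs (n + 1)) ⊆ toSet (xs n)) →
      G xs ∉ I ∧ ∀ n, (toSet (G xs) \ toSet (xs n)).Finite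

/-- `(t n)_{n∈ℕ}` is a partition of `x` into finite sets. -/
def FinPartition (x : Cantor) (t : ℕ → Cantor) : Prop :=
  (∀ n, (toSet (t n)).Finite) ∧
  (∀ m n, m ≠ n → Disjoint (toSet (t m)) (toSet (t n))) ∧
  (⋃ n, toSet (t n)) = toSet x

/-- A Borel ideal `I` is uniformly `q⁺`. -/
def UnifQplus (I : Set Cantor) : Prop :=
  ∃ F : Cantor × (ℕ → Cantor) → Cantor, Measurable F ∧
    ∀ (x : Cantor) (t : ℕ → Cantor), x ∉ I → FinPartition x t →
      toSet (F (x, t)) ⊆ toSet x ∧ F (x, t) ∉ I ∧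
      ∀ n, (toSet (F (x, t)) ∩ toSet (t n)).Subsingleton

/-- The ideal `I` is `q⁺`. -/
def Qplus (I : Set Cantor) : Prop :=
  ∀ (x : Cantor) (t : ℕ → Cantor), x ∉ I → FinPartition x t →
    ∃ y : Cantor, toSet y ⊆ toSet x ∧ y ∉ I ∧
      ∀ n, (toSet y ∩ toSet (t n)).Subsingleton

/-- The ideal `I` is selective. -/
def Selective (I : Set Cantor) : Prop :=
  ∀ xs : ℕ → Cantor, (∀ n, xs n ∉ I) → (∀ n, toSet (xs (n + 1)) ⊆ toSet (xs n)) →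
    ∃ x : Cantor, x ∉ I ∧ ∀ n ∈ toSet x, toSet x \ Set.Iic n ⊆ toSet (xs n)

/-- The ideal generated by `K`: `x ∈ IdealGen K` iff `x ⊆ y₁ ∪ … ∪ y_n` for some
`y₁, …, y_n ∈ K`. -/
def IdealGen (K : Set Cantor) : Set Cantor :=
  {x | ∃ l : List Cantor, l ≠ [] ∧ (∀ y ∈ l, y ∈ K) ∧ toSet x ⊆ ⋃ y ∈ l, toSet y}

/-- `↓K = {x : x ⊆ y for some y ∈ K}`. -/
def Down (K : Set Cantor) : Set Cantor := {x | ∃ y ∈ K, toSet x ⊆ toSet y}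

/-- `C` is hereditary: closed under taking subsets. -/
def Hereditary (C : Set Cantor) : Prop :=
  ∀ x ∈ C, ∀ y : Cantor, toSet y ⊆ toSet x → y ∈ C

/-- `A ⊆ 2^ℕ` is `Σ¹₂`: the projection of a coanalytic subset of `2^ℕ × ℕ^ℕ`. -/
def Sigma12 (A : Set Cantor) : Prop :=
  ∃ C : Set (Cantor × (ℕ → ℕ)), MeasureTheory.AnalyticSet Cᶜ ∧
    A = {x | ∃ w : ℕ → ℕ, (x, w) ∈ C}

/-- `A ⊆ 2^ℕ` is `Π¹₂`: the complement of a `Σ¹₂` set. -/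
def Pi12 (A : Set Cantor) : Prop := Sigma12 Aᶜ

section Aux

open scoped Classical

variable (B : Set (Finset ℕ))

def GoodB (s : Finset ℕ) : Prop := ∀ t ∈ B, InitSegF t s → t = s

def NWrel (t s : Finset ℕ) : Prop :=
  GoodB B s ∧ s ∉ B ∧ ∃ m, s.sup id < m ∧ t = insert m s

variable {B}

lemma initSegF_of_subset {s t : Finset ℕ} (hst : s ⊆ t)
    (h : ∀ m ∈ t, m ∉ s → s.sup id < m) : InitSegF s t := by
  refine ⟨s.sup id, ?_⟩
  ext a
  simp only [Finset.mem_inter, Finset.mem_Iic]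
  constructor
  · intro ha; exact ⟨hst ha, Finset.le_sup (f := id) ha⟩
  · rintro ⟨hat, han⟩
    by_contra hs
    exact absurd han (not_le.2 (h a hat hs))

lemma goodB_insert {s : Finset ℕ} (hg : GoodB B s) (hsB : s ∉ B) {m : ℕ}
    (hm : s.sup id < m) : GoodB B (insert m s) := by
  rintro t ht ⟨n, hn⟩
  rcases le_or_gt m n with h | h
  · have : t = insert m s := by
      rw [hn]
      apply Finset.inter_eq_left.2
      intro a ha
      simp only [Finset.mem_insert] at ha
      rcases ha with rfl | ha
      · exact Finset.mem_Iic.2 h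
      · exact Finset.mem_Iic.2 (le_trans (Finset.le_sup (f := id) ha) (le_trans hm.le h))
    exact this
  · exfalso
    have : t = s ∩ Finset.Iic n := by
      rw [hn]
      ext a
      simp only [Finset.mem_inter, Finset.mem_Iic, Finset.mem_insert]
      constructor
      · rintro ⟨rfl | ha, h2⟩
        · omega
        · exact ⟨ha, h2⟩
      · rintro ⟨ha, h2⟩; exact ⟨Or.inr ha, h2⟩
    exact hsB ((hg t ht ⟨n, this⟩) ▸ ht)


lemma nwrel_wf (hB : IsFrontOn B Set.univ) : WellFounded (NWrel B) := by
  constructor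
  intro a
  by_contra ha
  have step : ∀ x : {x : Finset ℕ // ¬Acc (NWrel B) x},
      ∃ y : {x : Finset ℕ // ¬Acc (NWrel B) x}, NWrel B y.1 x.1 := by
    rintro ⟨x, hx⟩
    obtain ⟨b, hb1, hb2⟩ := exists_not_acc_lt_of_not_acc hx
    exact ⟨⟨b, hb1⟩, hb2⟩
  choose g hg using step
  set f : ℕ → {x : Finset ℕ // ¬Acc (NWrel B) x} := fun n => g^[n] ⟨a, ha⟩ with hf
  have hstep : ∀ n, NWrel B (f (n + 1)).1 (f n).1 := by
    intro n
    have : f (n + 1) = g (f n) := Function.iterate_succ_apply' g n _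
    rw [this]
    exact hg (f n)
  set s : ℕ → Finset ℕ := fun n => (f n).1 with hs
  have hgood : ∀ n, GoodB B (s n) := fun n => (hstep n).1
  have hnB : ∀ n, s n ∉ B := fun n => (hstep n).2.1
  choose m hm hins0 using fun n => (hstep n).2.2
  have hins : ∀ n, s (n + 1) = insert (m n) (s n) := fun n => hins0 n
  have hmem : ∀ n, m n ∈ s (n + 1) := fun n => (hins n) ▸ Finset.mem_insert_self _ _
  have hsub : ∀ {i j : ℕ}, i ≤ j → s i ⊆ s j := by
    intro i j hij
    induction j with
    | zero => simp_all
    | succ j ih =>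
      rcases Nat.lt_or_ge i (j+1) with h | h
      · exact (ih (by omega)).trans ((hins j) ▸ Finset.subset_insert _ _)
      · have : i = j + 1 := by omega
        subst this; exact Finset.Subset.refl _
  have hmlt : StrictMono m := by
    apply strictMono_nat_of_lt_succ
    intro n
    exact lt_of_le_of_lt (Finset.le_sup (f := id) (hmem n)) (hm (n + 1))
  -- elements appearing later are of the form m k
  have key : ∀ j i, i ≤ j → ∀ b ∈ s j, b ∉ s i → ∃ k, i ≤ k ∧ b = m k := by
    intro j
    induction j with
    | zero => intro i hi b hb hbi; interval_cases i; exact absurd hb hbi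
    | succ j ih =>
      intro i hi b hb hbi
      rcases Nat.lt_or_ge i (j+1) with h | h
      · rw [hins j, Finset.mem_insert] at hb
        rcases hb with rfl | hb
        · exact ⟨j, by omega, rfl⟩
        · exact ih i (by omega) b hb hbi
      · have : i = j + 1 := by omega
        subst this; exact absurd hb hbi
  set y : Set ℕ := ⋃ n, (s n : Set ℕ) with hy
  have hyinf : y.Infinite := by
    apply Set.infinite_of_injective_forall_mem (f := m) hmlt.injective
    intro n
    exact Set.mem_iUnion.2 ⟨n + 1, hmem n⟩
  obtain ⟨t, htB, n0, hseg⟩ := hB.2.2 y (Set.subset_univ _) hyinf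
  set K : ℕ := n0 + 1 with hK
  have hyK : y ∩ Set.Iic n0 = (s K : Set ℕ) ∩ Set.Iic n0 := by
    apply Set.Subset.antisymm
    · rintro b ⟨hby, hbn⟩
      obtain ⟨j, hbj⟩ := Set.mem_iUnion.1 hby
      by_cases hbK : b ∈ s K
      · exact ⟨hbK, hbn⟩
      · rcases Nat.lt_or_ge j K with h | h
        · exact absurd (hsub (le_of_lt h) hbj) hbK
        · obtain ⟨k, hk, rfl⟩ := key j K h b hbj hbK
          have : K ≤ m k := le_trans (hmlt.le_apply) (hmlt.monotone hk)
          simp only [Set.mem_Iic] at hbn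
          omega
    · exact Set.inter_subset_inter_left _ (Set.subset_iUnion (fun n => (s n : Set ℕ)) K)
  have hIS : InitSegF t (s K) := by
    refine ⟨n0, Finset.coe_injective ?_⟩
    rw [Finset.coe_inter, Finset.coe_Iic, hseg, hyK]
  exact hnB K ((hgood K t htB hIS) ▸ htB)


open scoped Classical

noncomputable def mins (z : Cantor) : ℕ := sInf {n | z n = true}

def cutAbove (m : ℕ) (z : Cantor) : Cantor := fun n => z n && decide (m < n)

lemma toSet_cutAbove (m : ℕ) (z : Cantor) :
    toSet (cutAbove m z) = toSet z ∩ Set.Ioi m := by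
  ext n; simp [toSet, cutAbove, Set.mem_Ioi, and_comm]

lemma mins_mem {z : Cantor} (hz : (toSet z).Nonempty) : mins z ∈ toSet z :=
  Nat.sInf_mem hz

abbrev NWInp := (Finset ℕ → Bool) × Cantor

noncomputable def PSeq (child : ℕ → NWInp → Cantor × Bool) (p : NWInp) : ℕ → Cantor × Bool
  | 0 => (p.2, false)
  | k+1 => child (mins (PSeq child p k).1) (p.1, cutAbove (mins (PSeq child p k).1) (PSeq child p k).1)

noncomputable def fuseColor (child : ℕ → NWInp → Cantor × Bool) (p : NWInp) : Bool :=
  if {k : ℕ | (PSeq child p (k+1)).2 = true}.Infinite then true else false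

noncomputable def fuse (child : ℕ → NWInp → Cantor × Bool) (p : NWInp) : Cantor × Bool :=
  (fun n => if ∃ k, mins (PSeq child p k).1 = n ∧ (PSeq child p (k+1)).2 = fuseColor child p
      then true else false,
   fuseColor child p)

lemma fuse_spec {B : Set (Finset ℕ)} {s : Finset ℕ} (hsB : s ∉ B)
    (child : ℕ → NWInp → Cantor × Bool)
    (hchild : ∀ m, s.sup id < m → ∀ (F : Finset ℕ → Bool) (x : Cantor),
      (toSet x).Infinite → toSet x ⊆ Set.Ioi m →
      toSet (child m (F, x)).1 ⊆ toSet x ∧ (toSet (child m (F, x)).1).Infinite ∧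
      ∀ t ∈ B, insert m s ⊆ t → (t : Set ℕ) ⊆ ↑(insert m s) ∪ toSet (child m (F, x)).1 →
        F t = (child m (F, x)).2)
    (F : Finset ℕ → Bool) (x : Cantor) (hx : (toSet x).Infinite)
    (hxs : toSet x ⊆ Set.Ioi (s.sup id)) :
    toSet (fuse child (F, x)).1 ⊆ toSet x ∧ (toSet (fuse child (F, x)).1).Infinite ∧
    ∀ t ∈ B, s ⊆ t → (t : Set ℕ) ⊆ ↑s ∪ toSet (fuse child (F, x)).1 →
      F t = (fuse child (F, x)).2 := by
  set p : NWInp := (F, x) with hp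
  set X : ℕ → Cantor := fun k => (PSeq child p k).1 with hX
  set nk : ℕ → ℕ := fun k => mins (X k) with hnk
  set ck : ℕ → Bool := fun k => (PSeq child p (k+1)).2 with hck
  have main : ∀ k, (toSet (X k)).Infinite ∧ toSet (X k) ⊆ toSet x := by
    intro k; induction k with
    | zero => exact ⟨hx, subset_rfl⟩
    | succ k ih =>
      have hnkm : nk k ∈ toSet (X k) := mins_mem ih.1.nonempty
      have hgt : s.sup id < nk k := hxs (ih.2 hnkm)
      have hcut : toSet (cutAbove (nk k) (X k)) = toSet (X k) ∩ Set.Ioi (nk k) :=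
        toSet_cutAbove _ _
      have hinf : (toSet (cutAbove (nk k) (X k))).Infinite := by
        rw [hcut, ← Set.compl_Iic, ← Set.diff_eq]
        exact ih.1.diff (Set.finite_Iic (nk k))
      have h1 := hchild (nk k) hgt F (cutAbove (nk k) (X k)) hinf
        (by rw [hcut]; exact Set.inter_subset_right)
      have hXe : X (k+1) = (child (nk k) (F, cutAbove (nk k) (X k))).1 := rfl
      rw [hXe]
      exact ⟨h1.2.1, (h1.1.trans (by rw [hcut]; exact Set.inter_subset_left)).trans ih.2⟩
  have hnkm : ∀ k, nk k ∈ toSet (X k) := fun k => mins_mem (main k).1.nonempty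
  have hgt : ∀ k, s.sup id < nk k := fun k => hxs ((main k).2 (hnkm k))
  have hstep : ∀ k, toSet (X (k+1)) ⊆ toSet (X k) ∩ Set.Ioi (nk k) ∧
      ∀ t ∈ B, insert (nk k) s ⊆ t →
        (t : Set ℕ) ⊆ ↑(insert (nk k) s) ∪ toSet (X (k+1)) → F t = ck k := by
    intro k
    have hcut : toSet (cutAbove (nk k) (X k)) = toSet (X k) ∩ Set.Ioi (nk k) :=
      toSet_cutAbove _ _
    have hinf : (toSet (cutAbove (nk k) (X k))).Infinite := by
      rw [hcut, ← Set.compl_Iic, ← Set.diff_eq]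
      exact (main k).1.diff (Set.finite_Iic (nk k))
    have h1 := hchild (nk k) (hgt k) F (cutAbove (nk k) (X k)) hinf
      (by rw [hcut]; exact Set.inter_subset_right)
    have hXe : X (k+1) = (child (nk k) (F, cutAbove (nk k) (X k))).1 := rfl
    have hce : ck k = (child (nk k) (F, cutAbove (nk k) (X k))).2 := rfl
    rw [hXe, hce]
    exact ⟨h1.1.trans hcut.le, h1.2.2⟩
  have hchain : ∀ j k, j ≤ k → toSet (X k) ⊆ toSet (X j) := by
    intro j k hjk
    induction k with
    | zero => have : j = 0 := by omega
              subst this; exact subset_rfl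
    | succ k ih =>
      rcases Nat.lt_or_ge j (k+1) with h | h
      · exact ((hstep k).1.trans Set.inter_subset_left).trans (ih (by omega))
      · have : j = k + 1 := by omega
        subst this; exact subset_rfl
  have hmono : StrictMono nk := by
    apply strictMono_nat_of_lt_succ
    intro k
    exact ((hstep k).1 (hnkm (k+1))).2
  set c : Bool := fuseColor child p with hc
  have hKinf : {k | ck k = c}.Infinite := by
    by_cases h : {k : ℕ | (PSeq child p (k+1)).2 = true}.Infinite
    · have hce : c = true := if_pos h
      rw [hce]; exact h
    · have hce : c = false := if_neg h
      rw [hce]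
      have : {k | ck k = false} = {k : ℕ | (PSeq child p (k+1)).2 = true}ᶜ := by
        ext k; simp [hck, Bool.not_eq_true]
      rw [this]
      exact Set.Finite.infinite_compl (Set.not_infinite.1 h)
  have hty : toSet (fuse child p).1 = nk '' {k | ck k = c} := by
    ext n
    simp only [toSet, fuse, Set.mem_setOf_eq, Set.mem_image]
    constructor
    · intro h
      by_contra hcon
      rw [if_neg (fun hex => hcon (by obtain ⟨k, h1, h2⟩ := hex; exact ⟨k, h2, h1⟩))] at h
      exact Bool.false_ne_true h
    · rintro ⟨k, h1, h2⟩
      rw [if_pos ⟨k, h2, h1⟩]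
  refine ⟨?_, ?_, ?_⟩
  · rw [hty]
    rintro n ⟨k, _, rfl⟩
    exact (main k).2 (hnkm k)
  · rw [hty]
    exact hKinf.image (Set.injOn_of_injective hmono.injective)
  · intro t htB hst htsub
    have htns : (t \ s).Nonempty := by
      rcases Finset.eq_empty_or_nonempty (t \ s) with h | h
      · exfalso
        have : t = s := Finset.Subset.antisymm (fun a ha => by
          by_contra hc2
          exact (Finset.eq_empty_iff_forall_notMem.1 h a) (Finset.mem_sdiff.2 ⟨ha, hc2⟩)) hst
        exact hsB (this ▸ htB)
      · exact h
    set a : ℕ := (t \ s).min' htns with ha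
    have hat : a ∈ t := (Finset.mem_sdiff.1 ((t \ s).min'_mem htns)).1
    have has : a ∉ s := (Finset.mem_sdiff.1 ((t \ s).min'_mem htns)).2
    have hay : a ∈ toSet (fuse child p).1 := by
      rcases htsub (Finset.mem_coe.2 hat) with h | h
      · exact absurd (Finset.mem_coe.1 h) has
      · exact h
    rw [hty] at hay
    obtain ⟨k, hk2, hk1⟩ := hay
    have hgoal : F t = ck k := by
      apply (hstep k).2 t htB
      · rw [hk1]
        exact Finset.insert_subset hat hst
      · intro b hbt
        by_cases hbs : b ∈ (insert (nk k) s : Finset ℕ)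
        · exact Or.inl (Finset.mem_coe.2 hbs)
        · rcases htsub hbt with h | h
          · exact absurd (Finset.mem_insert_of_mem (Finset.mem_coe.1 h)) hbs
          · rw [hty] at h
            obtain ⟨j, hj2, hj1⟩ := h
            have hbns : b ∉ s := fun hbs' => hbs (Finset.mem_insert_of_mem hbs')
            have hbne : b ≠ nk k := fun hbe => hbs (hbe ▸ Finset.mem_insert_self _ _)
            have hab : a < b := by
              have : a ≤ b := (t \ s).min'_le b (Finset.mem_sdiff.2 ⟨Finset.mem_coe.1 hbt, hbns⟩)
              rcases lt_or_eq_of_le this with h' | h'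
              · exact h'
              · exact absurd (h' ▸ hk1.symm ▸ rfl : b = nk k) hbne
            have hkj : k < j := by
              rw [← hmono.lt_iff_lt]
              rw [hk1, hj1]
              exact hab
            exact Or.inr (hchain (k+1) j hkj (hj1 ▸ hnkm j))
    rw [hgoal, hk2]
    rfl

section Meas

variable {α : Type*} [MeasurableSpace α]

lemma measurable_of_bool {f : α → Bool} (h : MeasurableSet {a | f a = true}) :
    Measurable f := by
  apply measurable_to_countable'
  intro b
  cases b
  · have : f ⁻¹' {false} = {a | f a = true}ᶜ := by
      ext a; simp [Bool.not_eq_true]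
    rw [this]; exact h.compl
  · exact h

lemma measurable_apply_nat {β : Type*} [MeasurableSpace β] {f : α → ℕ} (hf : Measurable f)
    {g : ℕ → α → β} (hg : ∀ n, Measurable (g n)) : Measurable fun a => g (f a) a := by
  intro t ht
  have : (fun a => g (f a) a) ⁻¹' t = ⋃ n, f ⁻¹' {n} ∩ g n ⁻¹' t := by
    ext a
    simp only [Set.mem_preimage, Set.mem_iUnion, Set.mem_inter_iff, Set.mem_singleton_iff]
    exact ⟨fun h => ⟨f a, rfl, h⟩, fun ⟨n, hn, h⟩ => hn ▸ h⟩
  rw [this]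
  exact MeasurableSet.iUnion fun n => (hf (measurableSet_singleton n)).inter (hg n ht)

lemma measSet_coord (m : ℕ) : MeasurableSet {z : Cantor | z m = true} := by
  have h : {z : Cantor | z m = true} = (fun z : Cantor => z m) ⁻¹' {true} := by
    ext z; simp
  rw [h]
  exact measurable_pi_apply m (measurableSet_singleton true)

lemma measurable_mins : Measurable mins := by
  apply measurable_to_countable'
  intro n
  have : mins ⁻¹' {n} =
      ({z : Cantor | z n = true} ∩ ⋂ m, ⋂ (_ : m < n), {z : Cantor | z m = true}ᶜ) ∪
      ({z : Cantor | n = 0} ∩ ⋂ m, {z : Cantor | z m = true}ᶜ) := by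
    ext z
    simp only [Set.mem_preimage, Set.mem_singleton_iff, Set.mem_union, Set.mem_inter_iff,
      Set.mem_iInter, Set.mem_setOf_eq, Set.mem_compl_iff]
    have hm : mins z = sInf {i | z i = true} := rfl
    constructor
    · intro h
      rw [hm] at h
      rcases Set.eq_empty_or_nonempty {i | z i = true} with he | hne
      · right
        constructor
        · rw [← h, he, Nat.sInf_empty]
        · intro m
          exact Set.eq_empty_iff_forall_notMem.1 he m
      · left
        constructor
        · have := Nat.sInf_mem hne
          rwa [h] at this
        · intro m hmn
          exact Nat.notMem_of_lt_sInf (h ▸ hmn : m < sInf {i | z i = true})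
    · rintro (⟨h1, h2⟩ | ⟨h1, h2⟩)
      · rw [hm]
        apply le_antisymm
        · exact Nat.sInf_le h1
        · by_contra hc
          push_neg at hc
          exact h2 _ hc (Nat.sInf_mem (⟨n, h1⟩ : ({i | z i = true} : Set ℕ).Nonempty))
      · have he : {i | z i = true} = ∅ := Set.eq_empty_iff_forall_notMem.2 h2
        rw [hm, he, Nat.sInf_empty, h1]
  rw [this]
  apply MeasurableSet.union
  · exact (measSet_coord n).inter
      (MeasurableSet.iInter fun m => MeasurableSet.iInter fun _ => (measSet_coord m).compl)
  · rcases eq_or_ne n 0 with rfl | hn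
    · have h0 : {z : Cantor | (0:ℕ) = 0} = Set.univ := by simp
      rw [h0]
      exact MeasurableSet.univ.inter (MeasurableSet.iInter fun m => (measSet_coord m).compl)
    · have h0 : {z : Cantor | n = 0} = ∅ := by simp [hn]
      rw [h0]
      simp

lemma measurable_cutAbove (m : ℕ) : Measurable (cutAbove m) := by
  apply measurable_pi_lambda
  intro n
  exact (Measurable.of_discrete (f := fun b => b && decide (m < n))).comp (measurable_pi_apply n)

lemma nat_infinite_iff {S : Set ℕ} : S.Infinite ↔ ∀ N, ∃ k, N ≤ k ∧ k ∈ S := by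
  constructor
  · intro h N
    by_contra hc
    push_neg at hc
    refine h (Set.Finite.subset (Set.finite_Iic N) ?_)
    intro k hk
    simp only [Set.mem_Iic]
    by_contra h2
    exact hc k (by omega) hk
  · intro h hfin
    obtain ⟨k, hk, hkS⟩ := h (hfin.toFinset.sup id + 1)
    have : k ≤ hfin.toFinset.sup id := Finset.le_sup (f := id) (hfin.mem_toFinset.2 hkS)
    omega

lemma measurable_PSeq {child : ℕ → NWInp → Cantor × Bool}
    (hc : ∀ m, Measurable (child m)) (k : ℕ) :
    Measurable (fun p => PSeq child p k) := by
  induction k with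
  | zero => exact measurable_snd.prodMk measurable_const
  | succ k ih =>
    have h1 : Measurable fun p : NWInp => mins (PSeq child p k).1 :=
      measurable_mins.comp ih.fst
    exact measurable_apply_nat h1 (fun m =>
      (hc m).comp (measurable_fst.prodMk ((measurable_cutAbove m).comp ih.fst)))

lemma measurable_fuseColor {child : ℕ → NWInp → Cantor × Bool}
    (hc : ∀ m, Measurable (child m)) : Measurable (fuseColor child) := by
  apply measurable_of_bool
  have : {p | fuseColor child p = true} =
      ⋂ (N : ℕ), ⋃ (k : ℕ), ⋃ (_ : N ≤ k), {p : NWInp | (PSeq child p (k+1)).2 = true} := by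
    ext p
    simp only [Set.mem_setOf_eq, fuseColor, Set.mem_iInter, Set.mem_iUnion]
    constructor
    · intro h
      by_cases hi : {k : ℕ | (PSeq child p (k+1)).2 = true}.Infinite
      · intro N
        obtain ⟨k, hk1, hk2⟩ := nat_infinite_iff.1 hi N
        exact ⟨k, hk1, hk2⟩
      · rw [if_neg hi] at h; exact absurd h Bool.false_ne_true
    · intro h
      rw [if_pos (nat_infinite_iff.2 (fun N => by obtain ⟨k, h1, h2⟩ := h N; exact ⟨k, h1, h2⟩))]
  rw [this]
  exact MeasurableSet.iInter fun N => MeasurableSet.iUnion fun k => MeasurableSet.iUnion fun _ =>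
    ((measurable_PSeq hc (k+1)).snd) (measurableSet_singleton true)

lemma measurable_bool_eq {f g : α → Bool} (hf : Measurable f) (hg : Measurable g) :
    MeasurableSet {a | f a = g a} := by
  have : {a | f a = g a} = ({a | f a = true} ∩ {a | g a = true}) ∪
      ({a | f a = true}ᶜ ∩ {a | g a = true}ᶜ) := by
    ext a
    simp only [Set.mem_setOf_eq, Set.mem_union, Set.mem_inter_iff, Set.mem_compl_iff,
      Set.mem_setOf_eq, Bool.not_eq_true]
    cases hfa : f a <;> cases hga : g a <;> simp
  rw [this]
  exact ((hf (measurableSet_singleton true)).inter (hg (measurableSet_singleton true))).union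
    (((hf (measurableSet_singleton true)).compl).inter ((hg (measurableSet_singleton true)).compl))

lemma measurable_fuse {child : ℕ → NWInp → Cantor × Bool}
    (hc : ∀ m, Measurable (child m)) : Measurable (fuse child) := by
  apply Measurable.prodMk
  · apply measurable_pi_lambda
    intro n
    apply measurable_of_bool
    have : {p : NWInp | (if ∃ k, mins (PSeq child p k).1 = n ∧
        (PSeq child p (k+1)).2 = fuseColor child p then true else false) = true} =
        ⋃ k, ({p : NWInp | mins (PSeq child p k).1 = n} ∩
          {p : NWInp | (PSeq child p (k+1)).2 = fuseColor child p}) := by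
      ext p
      simp only [Set.mem_setOf_eq, Set.mem_iUnion, Set.mem_inter_iff]
      constructor
      · intro h
        by_contra hcon
        rw [if_neg (fun ⟨k, h1, h2⟩ => hcon ⟨k, h1, h2⟩)] at h
        exact Bool.false_ne_true h
      · rintro ⟨k, h1, h2⟩
        rw [if_pos ⟨k, h1, h2⟩]
    exact this ▸ MeasurableSet.iUnion fun k =>
      ((measurable_mins.comp (measurable_PSeq hc k).fst) (measurableSet_singleton n)).inter
        (measurable_bool_eq (measurable_PSeq hc (k+1)).snd (measurable_fuseColor hc))
  · exact measurable_fuseColor hc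

end Meas

noncomputable def NWSel {B : Set (Finset ℕ)} (hB : IsFrontOn B Set.univ) :
    Finset ℕ → NWInp → Cantor × Bool :=
  (nwrel_wf hB).fix (fun s ih =>
    if hs : s ∈ B then fun p => (p.2, p.1 s)
    else fuse (fun m =>
      if h : GoodB B s ∧ s.sup id < m then ih (insert m s) ⟨h.1, hs, m, h.2, rfl⟩
      else fun _ => (fun _ => false, false)))

lemma NWSel_eq {B : Set (Finset ℕ)} (hB : IsFrontOn B Set.univ) (s : Finset ℕ) :
    NWSel hB s =
      if hs : s ∈ B then fun p => (p.2, p.1 s)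
      else fuse (fun m =>
        if h : GoodB B s ∧ s.sup id < m then NWSel hB (insert m s)
        else fun _ => (fun _ => false, false)) := by
  rw [NWSel, WellFounded.fix_eq]

lemma NWSel_spec {B : Set (Finset ℕ)} (hB : IsFrontOn B Set.univ) :
    ∀ s : Finset ℕ, GoodB B s → ∀ (F : Finset ℕ → Bool) (x : Cantor),
      (toSet x).Infinite → toSet x ⊆ Set.Ioi (s.sup id) →
      toSet (NWSel hB s (F, x)).1 ⊆ toSet x ∧ (toSet (NWSel hB s (F, x)).1).Infinite ∧
      ∀ t ∈ B, s ⊆ t → (t : Set ℕ) ⊆ ↑s ∪ toSet (NWSel hB s (F, x)).1 →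
        F t = (NWSel hB s (F, x)).2 := by
  intro s
  refine (nwrel_wf hB).induction (C := fun s => GoodB B s → ∀ (F : Finset ℕ → Bool) (x : Cantor),
      (toSet x).Infinite → toSet x ⊆ Set.Ioi (s.sup id) →
      toSet (NWSel hB s (F, x)).1 ⊆ toSet x ∧ (toSet (NWSel hB s (F, x)).1).Infinite ∧
      ∀ t ∈ B, s ⊆ t → (t : Set ℕ) ⊆ ↑s ∪ toSet (NWSel hB s (F, x)).1 →
        F t = (NWSel hB s (F, x)).2) s ?_
  intro s ih hgood F x hx hxs
  rw [NWSel_eq]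
  by_cases hs : s ∈ B
  · simp only [dif_pos hs]
    refine ⟨subset_rfl, hx, ?_⟩
    intro t htB hst htsub
    have hIS : InitSegF s t := by
      apply initSegF_of_subset hst
      intro m hmt hms
      rcases htsub (Finset.mem_coe.2 hmt) with h | h
      · exact absurd (Finset.mem_coe.1 h) hms
      · exact Set.mem_Ioi.1 (hxs h)
    have hts : s = t := hB.2.1 s hs t htB hIS
    have : F t = F s := by rw [hts]
    exact this
  · simp only [dif_neg hs]
    refine fuse_spec hs _ ?_ F x hx hxs
    intro m hm F' x' hx' hxs'
    simp only [dif_pos (⟨hgood, hm⟩ : GoodB B s ∧ s.sup id < m)]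
    have hsupins : (insert m s).sup id = m := by
      rw [Finset.sup_insert]
      exact sup_eq_left.2 hm.le
    exact ih (insert m s) ⟨hgood, hs, m, hm, rfl⟩ (goodB_insert hgood hs hm) F' x' hx'
      (by rw [hsupins]; exact hxs')

lemma NWSel_meas {B : Set (Finset ℕ)} (hB : IsFrontOn B Set.univ) :
    ∀ s : Finset ℕ, Measurable (NWSel hB s) := by
  intro s
  refine (nwrel_wf hB).induction (C := fun s => Measurable (NWSel hB s)) s ?_
  intro s ih
  rw [NWSel_eq]
  by_cases hs : s ∈ B
  · simp only [dif_pos hs]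
    exact measurable_snd.prodMk ((measurable_pi_apply s).comp measurable_fst)
  · simp only [dif_neg hs]
    apply measurable_fuse
    intro m
    by_cases h : GoodB B s ∧ s.sup id < m
    · simp only [dif_pos h]
      exact ih (insert m s) ⟨h.1, hs, m, h.2, rfl⟩
    · simp only [dif_neg h]
      exact measurable_const


end Aux

/-- Uniform Nash–Williams theorem: for a front `B` on `ℕ` there is a Borel map
`S : 2^B × [ℕ]^ω → [ℕ]^ω` such that `S(F,x)` is an infinite subset of `x`
homogeneous for `F`. -/
theorem uniform_nash_williams (B : Set (Finset ℕ)) (hB : IsFrontOn B Set.univ) :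
    ∃ S : (Finset ℕ → Bool) → Cantor → Cantor,
      Measurable (Function.uncurry S) ∧
      ∀ F : Finset ℕ → Bool, {s : Finset ℕ | F s = true} ⊆ B →
        ∀ x : Cantor, (toSet x).Infinite →
          toSet (S F x) ⊆ toSet x ∧ (toSet (S F x)).Infinite ∧
          ((∀ s : Finset ℕ, (s : Set ℕ) ⊆ toSet (S F x) → s ∈ B → F s = true) ∨
           (∀ s : Finset ℕ, (s : Set ℕ) ⊆ toSet (S F x) → F s = false)) := by
  refine ⟨fun F x => (NWSel hB ∅ (F, cutAbove 0 x)).1, ?_, ?_⟩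
  · have h1 : Measurable (fun p : NWInp => (p.1, cutAbove 0 p.2)) :=
      measurable_fst.prodMk ((measurable_cutAbove 0).comp measurable_snd)
    exact ((NWSel_meas hB ∅).comp h1).fst
  · intro F hF x hx
    have hgood : GoodB B ∅ := by
      rintro t _ ⟨n, hn⟩
      simpa using hn
    have hx' : (toSet (cutAbove 0 x)).Infinite := by
      rw [toSet_cutAbove, ← Set.compl_Iic, ← Set.diff_eq]
      exact hx.diff (Set.finite_Iic 0)
    have hxs' : toSet (cutAbove 0 x) ⊆ Set.Ioi ((∅ : Finset ℕ).sup id) := by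
      intro a ha
      rw [toSet_cutAbove] at ha
      simpa [Finset.sup_empty] using ha.2
    obtain ⟨h1, h2, h3⟩ := NWSel_spec hB ∅ hgood F (cutAbove 0 x) hx' hxs'
    have hsubx : toSet (NWSel hB ∅ (F, cutAbove 0 x)).1 ⊆ toSet x :=
      h1.trans (by rw [toSet_cutAbove]; exact Set.inter_subset_left)
    refine ⟨hsubx, h2, ?_⟩
    by_cases hc : (NWSel hB ∅ (F, cutAbove 0 x)).2 = true
    · left
      intro s hsy hsB
      rw [h3 s hsB (Finset.empty_subset s) (by simpa using hsy), hc]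
    · right
      intro s hsy
      by_contra hFs
      have hFs' : F s = true := by
        cases hFse : F s
        · exact absurd hFse hFs
        · rfl
      have hsB : s ∈ B := hF hFs'
      have := h3 s hsB (Finset.empty_subset s) (by simpa using hsy)
      rw [hFs'] at this
      exact hc this.symm
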